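/- Let N ≥ 1, let f : {1,…,N} → ℝ, and let Z_1, …, Z_N be independent real-valued random variables on a probability space, each distributed according to the standard Gumbel distribution. Then for each i ∈ {1,…,N}, P[ f_i + Z_i = max_{1 ≤ j ≤ N} (f_j + Z_j) ] = exp(f_i) / Σ_{j=1}^N exp(f_j). -/

import Mathlib

open MeasureTheory ProbabilityTheory Real Set Filter Topology

noncomputable section GumbelAux

/-- auxiliary density: `exp (-t - S * exp (-t))`. -/
def gumbelAux (S t : ℝ) : ℝ := Real.exp (-t - S * Real.exp (-t))

/-- antiderivative of `gumbelAux S`. -/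
def gumbelAnti (S t : ℝ) : ℝ := Real.exp (-(S * Real.exp (-t))) / S

lemma continuous_gumbelAux (S : ℝ) : Continuous (gumbelAux S) := by
  unfold gumbelAux; fun_prop

lemma gumbelAux_nonneg (S t : ℝ) : 0 ≤ gumbelAux S t := (Real.exp_pos _).le

lemma gumbelAnti_nonneg (S t : ℝ) (hS : 0 < S) : 0 ≤ gumbelAnti S t :=
  div_nonneg (Real.exp_pos _).le hS.le

lemma gumbelAnti_hasDerivAt {S : ℝ} (hS : 0 < S) (t : ℝ) :
    HasDerivAt (gumbelAnti S) (gumbelAux S t) t := by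
  have h1 : HasDerivAt (fun u : ℝ => Real.exp (-u)) (-Real.exp (-t)) t := by
    simpa [Function.comp_def] using (Real.hasDerivAt_exp (-t)).comp t ((hasDerivAt_id t).neg)
  have h2 : HasDerivAt (fun u : ℝ => -(S * Real.exp (-u))) (S * Real.exp (-t)) t := by
    have := (h1.const_mul S).neg; simp only [mul_neg, neg_neg] at this; exact this
  have h3 := ((Real.hasDerivAt_exp (-(S * Real.exp (-t)))).comp t h2).div_const S
  have heq : Real.exp (-(S * Real.exp (-t))) * (S * Real.exp (-t)) / S
      = gumbelAux S t := by
    rw [mul_comm S (Real.exp (-t)), ← mul_assoc, mul_div_assoc, div_self hS.ne', mul_one,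
      ← Real.exp_add]
    unfold gumbelAux
    congr 1
    ring
  rw [← heq]
  exact h3

lemma gumbelAnti_tendsto_atTop {S : ℝ} (hS : 0 < S) :
    Tendsto (gumbelAnti S) atTop (𝓝 (1 / S)) := by
  have h0 : Tendsto (fun t : ℝ => Real.exp (-t)) atTop (𝓝 0) :=
    Real.tendsto_exp_atBot.comp tendsto_neg_atTop_atBot
  have h1 : Tendsto (fun t : ℝ => Real.exp (-(S * Real.exp (-t)))) atTop (𝓝 (Real.exp 0)) :=
    (Real.continuous_exp.tendsto 0).comp (by simpa using (h0.const_mul S).neg)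
  show Tendsto (fun t => Real.exp (-(S * Real.exp (-t))) / S) atTop (𝓝 (1 / S))
  simpa [gumbelAnti, Real.exp_zero] using h1.div_const S

lemma gumbelAnti_tendsto_atBot {S : ℝ} (hS : 0 < S) :
    Tendsto (gumbelAnti S) atBot (𝓝 0) := by
  have h0 : Tendsto (fun t : ℝ => Real.exp (-t)) atBot atTop :=
    Real.tendsto_exp_atTop.comp tendsto_neg_atBot_atTop
  have h1 : Tendsto (fun t : ℝ => S * Real.exp (-t)) atBot atTop :=
    h0.const_mul_atTop hS
  have h2 : Tendsto (fun t : ℝ => Real.exp (-(S * Real.exp (-t)))) atBot (𝓝 0) :=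
    Real.tendsto_exp_atBot.comp (tendsto_neg_atTop_atBot.comp h1)
  show Tendsto (fun t => Real.exp (-(S * Real.exp (-t))) / S) atBot (𝓝 0)
  simpa [gumbelAnti, zero_div] using h2.div_const S

lemma gumbelAux_integrableOn_Iic {S : ℝ} (hS : 0 < S) (b : ℝ) :
    IntegrableOn (gumbelAux S) (Iic b) := by
  refine integrableOn_Iic_of_intervalIntegral_norm_bounded (gumbelAnti S b) b
    (fun x : ℝ => (continuous_gumbelAux S).integrableOn_Ioc) (tendsto_id (α := ℝ)) ?_
  refine Filter.Eventually.of_forall fun x => ?_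
  have hnorm : ∀ u, ‖gumbelAux S u‖ = gumbelAux S u := fun u =>
    Real.norm_of_nonneg (gumbelAux_nonneg S u)
  calc (∫ u in x..b, ‖gumbelAux S u‖) = ∫ u in x..b, gumbelAux S u := by
        simp_rw [hnorm]
    _ = gumbelAnti S b - gumbelAnti S x :=
        intervalIntegral.integral_eq_sub_of_hasDerivAt
          (fun t _ => gumbelAnti_hasDerivAt hS t)
          ((continuous_gumbelAux S).intervalIntegrable _ _)
    _ ≤ gumbelAnti S b := by
        have := gumbelAnti_nonneg S x hS; linarith

lemma gumbelAux_integrable {S : ℝ} (hS : 0 < S) : Integrable (gumbelAux S) := by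
  rw [← integrableOn_univ, ← Set.Iic_union_Ioi (a := (0 : ℝ))]
  exact (gumbelAux_integrableOn_Iic hS 0).union
    (integrableOn_Ioi_deriv_of_nonneg' (fun x _ => gumbelAnti_hasDerivAt hS x)
      (fun x _ => gumbelAux_nonneg S x) (gumbelAnti_tendsto_atTop hS))

lemma gumbelAux_integral {S : ℝ} (hS : 0 < S) : ∫ t, gumbelAux S t = 1 / S := by
  have := integral_of_hasDerivAt_of_tendsto (fun x => gumbelAnti_hasDerivAt hS x)
    (gumbelAux_integrable hS) (gumbelAnti_tendsto_atBot hS) (gumbelAnti_tendsto_atTop hS)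
  simpa using this

lemma gumbelAux_integral_Iic {S : ℝ} (hS : 0 < S) (b : ℝ) :
    ∫ t in Iic b, gumbelAux S t = Real.exp (-(S * Real.exp (-b))) / S := by
  have := integral_Iic_of_hasDerivAt_of_tendsto' (fun x _ => gumbelAnti_hasDerivAt hS x)
    (gumbelAux_integrableOn_Iic hS b) (gumbelAnti_tendsto_atBot hS)
  simpa [gumbelAnti] using this

lemma gumbelAux_lintegral {S : ℝ} (hS : 0 < S) :
    ∫⁻ t, ENNReal.ofReal (gumbelAux S t) = ENNReal.ofReal (1 / S) := by
  rw [← ofReal_integral_eq_lintegral_ofReal (gumbelAux_integrable hS)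
    (Filter.Eventually.of_forall (gumbelAux_nonneg S)), gumbelAux_integral hS]

/-- the standard Gumbel measure on `ℝ`. -/
def gumbelMeasure : Measure ℝ :=
  MeasureTheory.volume.withDensity fun t => ENNReal.ofReal (gumbelAux 1 t)

lemma gumbelMeasure_apply {s : Set ℝ} (hs : MeasurableSet s) :
    gumbelMeasure s = ∫⁻ t in s, ENNReal.ofReal (gumbelAux 1 t) :=
  withDensity_apply _ hs

instance : IsProbabilityMeasure gumbelMeasure := by
  constructor
  rw [gumbelMeasure_apply MeasurableSet.univ, Measure.restrict_univ, gumbelAux_lintegral one_pos]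
  simp

lemma gumbelMeasure_Iic (x : ℝ) :
    gumbelMeasure (Iic x) = ENNReal.ofReal (Real.exp (-Real.exp (-x))) := by
  rw [gumbelMeasure_apply measurableSet_Iic,
    ← ofReal_integral_eq_lintegral_ofReal (gumbelAux_integrableOn_Iic one_pos x)
      (Filter.Eventually.of_forall (gumbelAux_nonneg 1)),
    gumbelAux_integral_Iic one_pos x]
  simp

end GumbelAux

theorem stmt7 {Ω : Type*} [MeasureSpace Ω] [IsProbabilityMeasure (ℙ : Measure Ω)]
    (N : ℕ) (hN : 1 ≤ N) (f : Fin N → ℝ) (Z : Fin N → Ω → ℝ)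
    (hmeas : ∀ i, Measurable (Z i))
    (hindep : iIndepFun (m := fun _ => Real.measurableSpace) Z ℙ)
    (hgumbel : ∀ i x, (ℙ {ω | Z i ω ≤ x}).toReal = Real.exp (-Real.exp (-x)))
    (i : Fin N) :
    (ℙ {ω | f i + Z i ω = ⨆ j, (f j + Z j ω)}).toReal =
      Real.exp (f i) / ∑ j, Real.exp (f j) := by
  obtain ⟨n, rfl⟩ : ∃ n, N = n + 1 := ⟨N - 1, (Nat.succ_pred_eq_of_pos hN).symm⟩
  have hZmeas : Measurable (fun ω j => Z j ω) := measurable_pi_lambda _ hmeas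
  -- each Z j has law gumbelMeasure
  have hlaw : ∀ j, Measure.map (Z j) ℙ = gumbelMeasure := by
    intro j
    haveI : IsProbabilityMeasure (Measure.map (Z j) ℙ) :=
      Measure.isProbabilityMeasure_map (hmeas j).aemeasurable
    refine MeasureTheory.Measure.ext_of_Iic _ _ fun x => ?_
    rw [Measure.map_apply (hmeas j) measurableSet_Iic, gumbelMeasure_Iic]
    have h2 : ℙ (Z j ⁻¹' Iic x) ≠ ⊤ := measure_ne_top _ _
    have h1 := hgumbel j x
    have hsets : Z j ⁻¹' Iic x = {ω | Z j ω ≤ x} := rfl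
    rw [hsets, ← h1, ENNReal.ofReal_toReal]
    exact hsets ▸ h2
  -- joint law is the product of gumbel measures
  have hjoint : Measure.map (fun ω j => Z j ω) ℙ
      = Measure.pi (fun _ : Fin (n + 1) => gumbelMeasure) := by
    refine (Measure.pi_eq fun s hs => ?_).symm
    rw [Measure.map_apply hZmeas (MeasurableSet.univ_pi hs)]
    have hpre : (fun ω j => Z j ω) ⁻¹' (Set.univ.pi s) = ⋂ j, Z j ⁻¹' s j := by
      ext ω; simp [Set.mem_pi]
    rw [hpre]
    calc ℙ (⋂ j, Z j ⁻¹' s j) = ∏ j, ℙ (Z j ⁻¹' s j) := by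
          have := hindep.measure_inter_preimage_eq_mul Finset.univ (fun j _ => hs j)
          simpa using this
      _ = ∏ j, gumbelMeasure (s j) := by
          refine Finset.prod_congr rfl fun j _ => ?_
          rw [← hlaw j, Measure.map_apply (hmeas j) (hs j)]
  -- rewrite the event
  set T : Set (Fin (n + 1) → ℝ) := {x | ∀ j, f j + x j ≤ f i + x i} with hTdef
  have hset : {ω | f i + Z i ω = ⨆ j, (f j + Z j ω)} = (fun ω j => Z j ω) ⁻¹' T := by
    ext ω
    simp only [Set.mem_setOf_eq, Set.mem_preimage, hTdef]
    constructor
    · intro h j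
      rw [h]
      exact le_ciSup (Set.Finite.bddAbove (Set.finite_range fun j => f j + Z j ω)) j
    · intro h
      exact le_antisymm (le_ciSup (Set.Finite.bddAbove (Set.finite_range fun j => f j + Z j ω)) i) (ciSup_le h)
  have hT : MeasurableSet T := by
    rw [hTdef, Set.setOf_forall]
    exact MeasurableSet.iInter fun j => measurableSet_le
      (measurable_const.add (measurable_pi_apply j))
      (measurable_const.add (measurable_pi_apply i))
  rw [hset, ← Measure.map_apply hZmeas hT, hjoint]
  -- split off coordinate i
  set c : Fin n → ℝ := fun k => f i - f (i.succAbove k) with hcdef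
  set A := ∑ k, Real.exp (-(c k)) with hAdef
  have hA : 0 ≤ A := Finset.sum_nonneg fun _ _ => (Real.exp_pos _).le
  have h1A : (0 : ℝ) < 1 + A := by linarith
  set e := MeasurableEquiv.piFinSuccAbove (fun _ : Fin (n + 1) => ℝ) i with hedef
  set B : Set (ℝ × (Fin n → ℝ)) := {p | ∀ k, p.2 k ≤ p.1 + c k} with hBdef
  have hB : MeasurableSet B := by
    rw [hBdef, Set.setOf_forall]
    exact MeasurableSet.iInter fun k => measurableSet_le
      (measurable_snd.eval) (measurable_fst.add measurable_const)
  have hTB : T = e ⁻¹' B := by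
    ext x
    show (∀ j, f j + x j ≤ f i + x i) ↔ ∀ k, (e x).2 k ≤ (e x).1 + c k
    have he1 : (e x).1 = x i := rfl
    have he2 : ∀ k, (e x).2 k = x (i.succAbove k) := fun k => rfl
    rw [Fin.forall_iff_succAbove i]
    simp only [he1, he2, hcdef]
    constructor
    · rintro ⟨-, h⟩ k
      have := h k; linarith
    · intro h
      refine ⟨le_rfl, fun k => ?_⟩
      have := h k; linarith
  have hMP := measurePreserving_piFinSuccAbove (fun _ : Fin (n + 1) => gumbelMeasure) i
  rw [hTB, hMP.measure_preimage hB.nullMeasurableSet, Measure.prod_apply hB]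
  -- compute the slice measure
  have hslicemeas : ∀ t : ℝ, (Measure.pi fun _ : Fin n => gumbelMeasure) (Prod.mk t ⁻¹' B)
      = ENNReal.ofReal (Real.exp (-(Real.exp (-t) * A))) := by
    intro t
    have hslice : (Prod.mk t ⁻¹' B) = Set.univ.pi fun k => Iic (t + c k) := by
      ext y; simp [hBdef, Set.mem_pi]
      rfl
    rw [hslice, Measure.pi_pi]
    simp_rw [gumbelMeasure_Iic]
    rw [← ENNReal.ofReal_prod_of_nonneg (fun _ _ => (Real.exp_pos _).le)]
    congr 1
    rw [← Real.exp_sum]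
    congr 1
    rw [hAdef, Finset.mul_sum, ← Finset.sum_neg_distrib]
    refine Finset.sum_congr rfl fun k _ => ?_
    rw [← Real.exp_add]
    congr 1
    ring
  calc (∫⁻ t, (Measure.pi fun _ : Fin n => gumbelMeasure) (Prod.mk t ⁻¹' B)
        ∂gumbelMeasure).toReal
      = (∫⁻ t, ENNReal.ofReal (Real.exp (-(Real.exp (-t) * A))) ∂gumbelMeasure).toReal := by
        rw [lintegral_congr hslicemeas]
    _ = (∫⁻ t, ENNReal.ofReal (gumbelAux 1 t)
          * ENNReal.ofReal (Real.exp (-(Real.exp (-t) * A)))).toReal := by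
        rw [gumbelMeasure, lintegral_withDensity_eq_lintegral_mul _
          ((continuous_gumbelAux 1).measurable.ennreal_ofReal)
          (Measurable.ennreal_ofReal (by fun_prop))]
        rfl
    _ = (∫⁻ t, ENNReal.ofReal (gumbelAux (1 + A) t)).toReal := by
        congr 1
        refine lintegral_congr fun t => ?_
        rw [← ENNReal.ofReal_mul (gumbelAux_nonneg 1 t)]
        congr 1
        unfold gumbelAux
        rw [← Real.exp_add]
        congr 1
        ring
    _ = 1 / (1 + A) := by
        rw [gumbelAux_lintegral h1A, ENNReal.toReal_ofReal (by positivity)]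
    _ = Real.exp (f i) / ∑ j, Real.exp (f j) := by
        have hsum : ∑ j, Real.exp (f j) = Real.exp (f i) * (1 + A) := by
          rw [Fin.sum_univ_succAbove (fun j => Real.exp (f j)) i, hAdef, mul_add, mul_one,
            Finset.mul_sum]
          congr 1
          refine Finset.sum_congr rfl fun k _ => ?_
          rw [← Real.exp_add]
          congr 1
          simp [hcdef]
        rw [hsum]
        rw [eq_div_iff (by positivity)]
        field_simp
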